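/- Let G, G' be symmetric 2-groups (symmetric monoidal groupoids with weak inverses). If (F, F_⊕) satisfies the compatibility axioms (SF1) with the associators and (SF2) with the commutators, then the unique unit isomorphism F_0 : 0' → F0 making (F, F_⊕, F_0) a monoidal functor also automatically makes it a symmetric monoidal functor; i.e., a pair (F, F_⊕) satisfying (SF1)-(SF2) extends uniquely to a morphism of symmetric 2-groups. -/

import Mathlib

open CategoryTheory MonoidalCategory

section Helpers

variable {C : Type*} [Category C] [MonoidalCategory C]

/-- If `Z` has a right-sided inverse up to iso, whiskering on the right by `Z` is injective. -/
private lemma wr_cancel {Z y : C} (j : Z ⊗ y ≅ 𝟙_ C) {A B : C} {f g : A ⟶ B}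
    (h : f ▷ Z = g ▷ Z) : f = g := by
  have key : ∀ k : A ⟶ B,
      (ρ_ A).inv ≫ (A ◁ j.inv) ≫ (k ▷ (Z ⊗ y)) ≫ (B ◁ j.hom) ≫ (ρ_ B).hom = k := by
    intro k
    rw [whisker_exchange_assoc]
    simp
  have h' : f ▷ (Z ⊗ y) = g ▷ (Z ⊗ y) := by
    rw [whiskerRight_tensor, whiskerRight_tensor, h]
  rw [← key f, ← key g, h']

/-- If `Z` has a left-sided inverse up to iso, whiskering on the left by `Z` is injective. -/
private lemma wl_cancel {Z y : C} (i : y ⊗ Z ≅ 𝟙_ C) {A B : C} {f g : A ⟶ B}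
    (h : Z ◁ f = Z ◁ g) : f = g := by
  have key : ∀ k : A ⟶ B,
      (λ_ A).inv ≫ (i.inv ▷ A) ≫ ((y ⊗ Z) ◁ k) ≫ (i.hom ▷ B) ≫ (λ_ B).hom = k := by
    intro k
    rw [← whisker_exchange_assoc]
    simp
  have h' : (y ⊗ Z) ◁ f = (y ⊗ Z) ◁ g := by
    rw [tensor_whiskerLeft, tensor_whiskerLeft, h]
  rw [← key f, ← key g, h']

/-- If `Z` is invertible up to iso on both sides, whiskering on the right by `Z` is
surjective on homs. -/
private lemma wr_surj {Z y : C} (j : Z ⊗ y ≅ 𝟙_ C) (i : y ⊗ Z ≅ 𝟙_ C) {A B : C}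
    (u : A ⊗ Z ⟶ B ⊗ Z) : ∃ f : A ⟶ B, f ▷ Z = u := by
  refine ⟨(ρ_ A).inv ≫ (A ◁ j.inv) ≫ (α_ A Z y).inv ≫ (u ▷ y) ≫ (α_ B Z y).hom ≫
      (B ◁ j.hom) ≫ (ρ_ B).hom, ?_⟩
  set f : A ⟶ B := (ρ_ A).inv ≫ (A ◁ j.inv) ≫ (α_ A Z y).inv ≫ (u ▷ y) ≫ (α_ B Z y).hom ≫
      (B ◁ j.hom) ≫ (ρ_ B).hom with hf
  apply wr_cancel i
  have hfzy : f ▷ (Z ⊗ y) = (α_ A Z y).inv ≫ (u ▷ y) ≫ (α_ B Z y).hom := by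
    have h1 : (A ◁ j.inv) ≫ (f ▷ (Z ⊗ y)) = (f ▷ 𝟙_ C) ≫ (B ◁ j.inv) :=
      whisker_exchange f j.inv
    have h2 : f ▷ 𝟙_ C = (ρ_ A).hom ≫ f ≫ (ρ_ B).inv := whiskerRight_id f
    calc f ▷ (Z ⊗ y) = (A ◁ j.hom) ≫ (A ◁ j.inv) ≫ (f ▷ (Z ⊗ y)) := by simp
      _ = (A ◁ j.hom) ≫ (ρ_ A).hom ≫ f ≫ (ρ_ B).inv ≫ (B ◁ j.inv) := by
          rw [h1, h2]; simp
      _ = (α_ A Z y).inv ≫ (u ▷ y) ≫ (α_ B Z y).hom := by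
          rw [hf]; simp
  calc (f ▷ Z) ▷ y = (α_ A Z y).hom ≫ (f ▷ (Z ⊗ y)) ≫ (α_ B Z y).inv := by
        rw [whiskerRight_tensor]; simp
    _ = u ▷ y := by rw [hfzy]; simp

end Helpers

/-- Let `G, G'` be symmetric 2-groups (symmetric monoidal groupoids with weak inverses).
A pair `(F, Fm)` satisfying the associator compatibility (SF1) and the commutator
compatibility (SF2) extends uniquely to a morphism of symmetric 2-groups: there is a
unique unit isomorphism `F₀ : 𝟙_ G' ⟶ F.obj (𝟙_ G)` satisfying the unit axioms (SF3),
and with it `(F, Fm, F₀)` is a symmetric monoidal functor. -/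
theorem stmt18 {G G' : Type*}
    [Groupoid G] [MonoidalCategory G] [SymmetricCategory G]
    [Groupoid G'] [MonoidalCategory G'] [SymmetricCategory G']
    (hinvG : ∀ x : G, ∃ y : G, Nonempty (x ⊗ y ≅ 𝟙_ G) ∧ Nonempty (y ⊗ x ≅ 𝟙_ G))
    (hinvG' : ∀ x : G', ∃ y : G', Nonempty (x ⊗ y ≅ 𝟙_ G') ∧ Nonempty (y ⊗ x ≅ 𝟙_ G'))
    (F : G ⥤ G') (Fm : ∀ x y : G, F.obj x ⊗ F.obj y ⟶ F.obj (x ⊗ y))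
    (hiso : ∀ x y : G, IsIso (Fm x y))
    (hnat : ∀ {x x' y y' : G} (f : x ⟶ x') (g : y ⟶ y'),
      (F.map f ⊗ₘ F.map g) ≫ Fm x' y' = Fm x y ≫ F.map (f ⊗ₘ g))
    (hSF1 : ∀ x y z : G,
      (Fm x y ▷ F.obj z) ≫ Fm (x ⊗ y) z ≫ F.map (α_ x y z).hom =
        (α_ (F.obj x) (F.obj y) (F.obj z)).hom ≫ (F.obj x ◁ Fm y z) ≫ Fm x (y ⊗ z))
    (hSF2 : ∀ x y : G,
      Fm x y ≫ F.map (β_ x y).hom = (β_ (F.obj x) (F.obj y)).hom ≫ Fm y x) :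
    ∃! F₀ : 𝟙_ G' ⟶ F.obj (𝟙_ G), IsIso F₀ ∧
      (∀ x : G, (F₀ ▷ F.obj x) ≫ Fm (𝟙_ G) x ≫ F.map (λ_ x).hom = (λ_ (F.obj x)).hom) ∧
      (∀ x : G, (F.obj x ◁ F₀) ≫ Fm x (𝟙_ G) ≫ F.map (ρ_ x).hom = (ρ_ (F.obj x)).hom) := by
  classical
  obtain ⟨y, ⟨j⟩, ⟨i⟩⟩ := hinvG' (F.obj (𝟙_ G))
  -- the "multiplication" map on `F (𝟙)`
  set e : F.obj (𝟙_ G) ⊗ F.obj (𝟙_ G) ⟶ F.obj (𝟙_ G) :=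
    Fm (𝟙_ G) (𝟙_ G) ≫ F.map (λ_ (𝟙_ G)).hom with he
  -- the left multiplication maps
  set L : ∀ x : G, F.obj (𝟙_ G) ⊗ F.obj x ⟶ F.obj x :=
    fun x => Fm (𝟙_ G) x ≫ F.map (λ_ x).hom with hL
  -- key consequence of (SF1):
  have key : ∀ x : G, e ▷ F.obj x =
      (α_ (F.obj (𝟙_ G)) (F.obj (𝟙_ G)) (F.obj x)).hom ≫ (F.obj (𝟙_ G) ◁ L x) := by
    intro x
    have hcancel : (e ▷ F.obj x) ≫ L x =
        ((α_ (F.obj (𝟙_ G)) (F.obj (𝟙_ G)) (F.obj x)).hom ≫ (F.obj (𝟙_ G) ◁ L x)) ≫ L x := by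
      have hGcoh : ((λ_ (𝟙_ G)).hom ▷ x) ≫ (λ_ x).hom =
          (α_ (𝟙_ G) (𝟙_ G) x).hom ≫ ((𝟙_ G) ◁ (λ_ x).hom) ≫ (λ_ x).hom := by
        monoidal
      have hn1 : (F.map (λ_ (𝟙_ G)).hom ▷ F.obj x) ≫ Fm (𝟙_ G) x =
          Fm (𝟙_ G ⊗ 𝟙_ G) x ≫ F.map ((λ_ (𝟙_ G)).hom ▷ x) := by
        have := hnat (λ_ (𝟙_ G)).hom (𝟙 x)
        simpa [tensorHom_id] using this
      have hn2 : Fm (𝟙_ G) (𝟙_ G ⊗ x) ≫ F.map ((𝟙_ G) ◁ (λ_ x).hom) =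
          (F.obj (𝟙_ G) ◁ F.map (λ_ x).hom) ≫ Fm (𝟙_ G) x := by
        have := hnat (𝟙 (𝟙_ G)) (λ_ x).hom
        simpa [id_tensorHom] using this.symm
      calc (e ▷ F.obj x) ≫ L x
          = (Fm (𝟙_ G) (𝟙_ G) ▷ F.obj x) ≫ (F.map (λ_ (𝟙_ G)).hom ▷ F.obj x) ≫
            Fm (𝟙_ G) x ≫ F.map (λ_ x).hom := by
            simp [he, hL, comp_whiskerRight]
        _ = (Fm (𝟙_ G) (𝟙_ G) ▷ F.obj x) ≫ Fm (𝟙_ G ⊗ 𝟙_ G) x ≫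
            F.map (((λ_ (𝟙_ G)).hom ▷ x) ≫ (λ_ x).hom) := by
            rw [reassoc_of% hn1]; simp
        _ = (Fm (𝟙_ G) (𝟙_ G) ▷ F.obj x) ≫ Fm (𝟙_ G ⊗ 𝟙_ G) x ≫
            F.map (α_ (𝟙_ G) (𝟙_ G) x).hom ≫ F.map ((𝟙_ G) ◁ (λ_ x).hom) ≫
            F.map (λ_ x).hom := by
            rw [hGcoh]; simp
        _ = (α_ (F.obj (𝟙_ G)) (F.obj (𝟙_ G)) (F.obj x)).hom ≫
            (F.obj (𝟙_ G) ◁ Fm (𝟙_ G) x) ≫ Fm (𝟙_ G) (𝟙_ G ⊗ x) ≫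
            F.map ((𝟙_ G) ◁ (λ_ x).hom) ≫ F.map (λ_ x).hom := by
            rw [reassoc_of% (hSF1 (𝟙_ G) (𝟙_ G) x)]
        _ = (α_ (F.obj (𝟙_ G)) (F.obj (𝟙_ G)) (F.obj x)).hom ≫
            (F.obj (𝟙_ G) ◁ Fm (𝟙_ G) x) ≫ (F.obj (𝟙_ G) ◁ F.map (λ_ x).hom) ≫
            Fm (𝟙_ G) x ≫ F.map (λ_ x).hom := by
            rw [reassoc_of% hn2]
        _ = ((α_ (F.obj (𝟙_ G)) (F.obj (𝟙_ G)) (F.obj x)).hom ≫ (F.obj (𝟙_ G) ◁ L x)) ≫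
            L x := by
            simp [hL, MonoidalCategory.whiskerLeft_comp]
    exact (cancel_mono (L x)).mp hcancel
  -- construct F₀
  obtain ⟨F₀, hF₀⟩ := wr_surj j i ((λ_ (F.obj (𝟙_ G))).hom ≫ inv e)
  have hF₀e : (F₀ ▷ F.obj (𝟙_ G)) ≫ e = (λ_ (F.obj (𝟙_ G))).hom := by
    rw [hF₀]; simp
  -- β_{𝟙,𝟙} = 𝟙 in G
  have hbetaunit : (β_ (𝟙_ G) (𝟙_ G)).hom = 𝟙 (𝟙_ G ⊗ 𝟙_ G) := by
    have h1 : (β_ (𝟙_ G) (𝟙_ G)).hom ≫ (λ_ (𝟙_ G)).hom = (ρ_ (𝟙_ G)).hom :=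
      braiding_leftUnitor (𝟙_ G)
    rw [← unitors_equal] at h1
    simpa using h1 =≫ (λ_ (𝟙_ G)).inv
  -- β' ≫ e = e
  have hbe : (β_ (F.obj (𝟙_ G)) (F.obj (𝟙_ G))).hom ≫ e = e := by
    have h2 := hSF2 (𝟙_ G) (𝟙_ G)
    rw [hbetaunit] at h2
    simp only [F.map_id, Category.comp_id] at h2
    rw [he, ← Category.assoc, ← h2]
  -- (F𝟙 ◁ F₀) ≫ e = ρ'
  have hF₀e' : (F.obj (𝟙_ G) ◁ F₀) ≫ e = (ρ_ (F.obj (𝟙_ G))).hom := by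
    calc (F.obj (𝟙_ G) ◁ F₀) ≫ e
        = (F.obj (𝟙_ G) ◁ F₀) ≫ (β_ (F.obj (𝟙_ G)) (F.obj (𝟙_ G))).hom ≫ e := by
          rw [hbe]
      _ = (β_ (F.obj (𝟙_ G)) (𝟙_ G')).hom ≫ (F₀ ▷ F.obj (𝟙_ G)) ≫ e := by
          rw [reassoc_of% (BraidedCategory.braiding_naturality_right (F.obj (𝟙_ G)) F₀)]
      _ = (β_ (F.obj (𝟙_ G)) (𝟙_ G')).hom ≫ (λ_ (F.obj (𝟙_ G))).hom := by rw [hF₀e]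
      _ = (ρ_ (F.obj (𝟙_ G))).hom := braiding_leftUnitor _
  -- left unit axiom
  have hleft : ∀ x : G, (F₀ ▷ F.obj x) ≫ Fm (𝟙_ G) x ≫ F.map (λ_ x).hom =
      (λ_ (F.obj x)).hom := by
    intro x
    apply wl_cancel i
    calc F.obj (𝟙_ G) ◁ ((F₀ ▷ F.obj x) ≫ Fm (𝟙_ G) x ≫ F.map (λ_ x).hom)
        = (F.obj (𝟙_ G) ◁ (F₀ ▷ F.obj x)) ≫ (F.obj (𝟙_ G) ◁ L x) := by
          simp [hL, MonoidalCategory.whiskerLeft_comp]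
      _ = (F.obj (𝟙_ G) ◁ (F₀ ▷ F.obj x)) ≫
          (α_ (F.obj (𝟙_ G)) (F.obj (𝟙_ G)) (F.obj x)).inv ≫ (e ▷ F.obj x) := by
          have h3 : (α_ (F.obj (𝟙_ G)) (F.obj (𝟙_ G)) (F.obj x)).inv ≫ (e ▷ F.obj x) =
              F.obj (𝟙_ G) ◁ L x := (Iso.inv_comp_eq _).mpr (key x)
          rw [← h3]
      _ = (α_ (F.obj (𝟙_ G)) (𝟙_ G') (F.obj x)).inv ≫
          ((F.obj (𝟙_ G) ◁ F₀) ▷ F.obj x) ≫ (e ▷ F.obj x) := by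
          rw [associator_inv_naturality_middle_assoc]
      _ = (α_ (F.obj (𝟙_ G)) (𝟙_ G') (F.obj x)).inv ≫
          ((ρ_ (F.obj (𝟙_ G))).hom ▷ F.obj x) := by
          rw [← comp_whiskerRight, hF₀e']
      _ = F.obj (𝟙_ G) ◁ (λ_ (F.obj x)).hom := by
          rw [← MonoidalCategory.triangle]; simp
  -- right unit axiom
  have hright : ∀ x : G, (F.obj x ◁ F₀) ≫ Fm x (𝟙_ G) ≫ F.map (ρ_ x).hom =
      (ρ_ (F.obj x)).hom := by
    intro x
    have hrho : (ρ_ x).hom = (β_ x (𝟙_ G)).hom ≫ (λ_ x).hom := (braiding_leftUnitor x).symm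
    calc (F.obj x ◁ F₀) ≫ Fm x (𝟙_ G) ≫ F.map (ρ_ x).hom
        = (F.obj x ◁ F₀) ≫ (Fm x (𝟙_ G) ≫ F.map (β_ x (𝟙_ G)).hom) ≫ F.map (λ_ x).hom := by
          rw [hrho]; simp
      _ = (F.obj x ◁ F₀) ≫ (β_ (F.obj x) (F.obj (𝟙_ G))).hom ≫ Fm (𝟙_ G) x ≫
          F.map (λ_ x).hom := by rw [hSF2]; simp
      _ = (β_ (F.obj x) (𝟙_ G')).hom ≫ (F₀ ▷ F.obj x) ≫ Fm (𝟙_ G) x ≫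
          F.map (λ_ x).hom := by
          rw [reassoc_of% (BraidedCategory.braiding_naturality_right (F.obj x) F₀)]
      _ = (β_ (F.obj x) (𝟙_ G')).hom ≫ (λ_ (F.obj x)).hom := by rw [hleft x]
      _ = (ρ_ (F.obj x)).hom := braiding_leftUnitor _
  refine ⟨F₀, ⟨?_, hleft, hright⟩, ?_⟩
  · exact inferInstance
  · rintro F₀' ⟨hiso', hl', hr'⟩
    apply wr_cancel j
    have h1 : (F₀' ▷ F.obj (𝟙_ G)) ≫ e = (λ_ (F.obj (𝟙_ G))).hom := hl' (𝟙_ G)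
    have h2 : (F₀' ▷ F.obj (𝟙_ G)) ≫ e = (F₀ ▷ F.obj (𝟙_ G)) ≫ e := by rw [h1, hF₀e]
    exact (cancel_mono e).mp h2
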